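/- Let ε ∈ (1/(4π), 3/(4π)). Then there exists Δ₀ > 0 such that for every Borel probability measure μ on 𝕋 whose support is contained in the image of [−Δ₀, Δ₀] under the projection ℝ → 𝕋, the iterates T_ε^n μ converge weakly to δ₀ as n → ∞; that is, the synchronized state δ₀ is a stable fixed point of the self-consistent operator. -/

import Mathlib

open MeasureTheory

/-- The observable `y ↦ cos(2πy)` on the circle `𝕋 = ℝ/ℤ`. -/
noncomputable def cosObs : UnitAddCircle → ℝ :=
  AddCircle.liftIco 1 0 (fun x => Real.cos (2 * Real.pi * x))

/-- The map `f_μ : 𝕋 → 𝕋` induced by `x ↦ 2(x − ε·sin(2πx)·∫ cos(2πy) dμ(y))`, arising from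
mean-field coupled doubling maps with coupling `h(x,y) = sin(2πx)cos(2πy)`. -/
noncomputable def fMu (ε : ℝ) (μ : Measure UnitAddCircle) : UnitAddCircle → UnitAddCircle :=
  AddCircle.liftIco 1 0 (fun x =>
    (↑(2 * (x - ε * Real.sin (2 * Real.pi * x) * ∫ y, cosObs y ∂μ)) : UnitAddCircle))

/-- The self-consistent operator `T_ε μ = (f_μ)_* μ`. -/
noncomputable def Tsc (ε : ℝ) (μ : Measure UnitAddCircle) : Measure UnitAddCircle :=
  μ.map (fMu ε μ)


lemma liftIco_coe_of_periodic {B : Type*} (f : ℝ → B) (hf : Function.Periodic f 1) (y : ℝ) :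
    AddCircle.liftIco 1 0 f (y : UnitAddCircle) = f y := by
  have hz : ((⌊y⌋ : ℝ) : UnitAddCircle) = 0 := by
    rw [AddCircle.coe_eq_zero_iff]; exact ⟨⌊y⌋, by simp⟩
  have h1 : (y : UnitAddCircle) = ((Int.fract y : ℝ) : UnitAddCircle) := by
    conv_lhs => rw [← Int.fract_add_floor y]
    rw [AddCircle.coe_add, hz, add_zero]
  rw [h1, AddCircle.liftIco_coe_apply (by constructor; exact Int.fract_nonneg y; · rw [zero_add]; exact Int.fract_lt_one y)]
  have := hf.sub_int_mul_eq (x := y) ⌊y⌋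
  rw [mul_one] at this
  rw [Int.fract]
  exact this

lemma cosObs_coe (y : ℝ) : cosObs (y : UnitAddCircle) = Real.cos (2 * Real.pi * y) := by
  refine liftIco_coe_of_periodic _ (fun x => ?_) y
  simp [mul_add, Real.cos_add_two_pi]

lemma coe_two_eq_zero : ((2 : ℝ) : UnitAddCircle) = 0 := by
  rw [AddCircle.coe_eq_zero_iff]; exact ⟨2, by norm_num⟩

lemma fMu_coe (ε : ℝ) (μ : Measure UnitAddCircle) (y : ℝ) :
    fMu ε μ (y : UnitAddCircle)
      = ((2 * (y - ε * Real.sin (2 * Real.pi * y) * ∫ z, cosObs z ∂μ) : ℝ) : UnitAddCircle) := by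
  refine liftIco_coe_of_periodic _ (fun x => ?_) y
  have hsin : Real.sin (2 * Real.pi * (x + 1)) = Real.sin (2 * Real.pi * x) := by
    rw [mul_add, mul_one, Real.sin_add_two_pi]
  rw [hsin]
  have : (2 * (x + 1 - ε * Real.sin (2 * Real.pi * x) * ∫ z, cosObs z ∂μ) : ℝ)
      = 2 * (x - ε * Real.sin (2 * Real.pi * x) * ∫ z, cosObs z ∂μ) + 2 := by ring
  rw [this, AddCircle.coe_add, coe_two_eq_zero, add_zero]

lemma continuous_cosObs : Continuous cosObs := by
  apply AddCircle.liftIco_zero_continuous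
  · simp [Real.cos_two_pi]
  · exact (Real.continuous_cos.comp (continuous_const.mul continuous_id)).continuousOn

lemma continuous_fMu (ε : ℝ) (μ : Measure UnitAddCircle) : Continuous (fMu ε μ) := by
  apply AddCircle.liftIco_zero_continuous
  · rw [eq_comm]
    have : (2 * ((1:ℝ) - ε * Real.sin (2 * Real.pi * 1) * ∫ z, cosObs z ∂μ) : ℝ)
        = 2 * (0 - ε * Real.sin (2 * Real.pi * 0) * ∫ z, cosObs z ∂μ) + 2 := by
      simp [Real.sin_two_pi]
    rw [this, AddCircle.coe_add, coe_two_eq_zero, add_zero]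
  · exact ((AddCircle.continuous_mk' 1).comp (by continuity)).continuousOn

lemma abs_self_sub_sin {t : ℝ} (h : |t| ≤ 1) : |t - Real.sin t| ≤ |t| ^ 3 / 4 := by
  have key : ∀ s : ℝ, 0 ≤ s → s ≤ 1 → |s - Real.sin s| ≤ s ^ 3 / 4 := by
    intro s hs hs1
    rcases eq_or_lt_of_le hs with h0 | h0
    · simp [← h0]
    · have h1 := Real.sin_lt h0
      have h2 := Real.sin_gt_sub_cube h0
      rw [abs_of_nonneg (by linarith)]
      linarith
  rcases le_or_gt 0 t with ht | ht
  · rw [abs_of_nonneg ht] at h ⊢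
    exact key t ht h
  · rw [abs_of_neg ht] at h ⊢
    have := key (-t) (by linarith) h
    rw [Real.sin_neg, show -t - -Real.sin t = -(t - Real.sin t) by ring, abs_neg] at this
    exact this

noncomputable def lamC (ε : ℝ) : ℝ := (1 + 2 * |1 - 2 * Real.pi * ε|) / 2

noncomputable def Del0 (ε : ℝ) : ℝ :=
  min (1/8) (Real.sqrt ((1 - 2 * |1 - 2 * Real.pi * ε|) / 200))

lemma a_bounds {ε : ℝ} (hε₁ : 1 / (4 * Real.pi) < ε) (hε₂ : ε < 3 / (4 * Real.pi)) :
    1/2 < 2 * Real.pi * ε ∧ 2 * Real.pi * ε < 3/2 := by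
  have hπ := Real.pi_pos
  rw [div_lt_iff₀ (by positivity)] at hε₁
  rw [lt_div_iff₀ (by positivity)] at hε₂
  constructor <;> nlinarith

lemma b_lt_half {ε : ℝ} (hε₁ : 1 / (4 * Real.pi) < ε) (hε₂ : ε < 3 / (4 * Real.pi)) :
    |1 - 2 * Real.pi * ε| < 1/2 := by
  obtain ⟨h1, h2⟩ := a_bounds hε₁ hε₂
  rw [abs_lt]; constructor <;> linarith

lemma lamC_lt_one {ε : ℝ} (hε₁ : 1 / (4 * Real.pi) < ε) (hε₂ : ε < 3 / (4 * Real.pi)) :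
    lamC ε < 1 := by
  have := b_lt_half hε₁ hε₂
  rw [lamC]; linarith

lemma lamC_nonneg (ε : ℝ) : 0 ≤ lamC ε := by
  have := abs_nonneg (1 - 2 * Real.pi * ε); rw [lamC]; linarith

lemma Del0_pos {ε : ℝ} (hε₁ : 1 / (4 * Real.pi) < ε) (hε₂ : ε < 3 / (4 * Real.pi)) :
    0 < Del0 ε := by
  have := b_lt_half hε₁ hε₂
  rw [Del0]
  apply lt_min (by norm_num)
  apply Real.sqrt_pos.mpr
  linarith

lemma Del0_le (ε : ℝ) : Del0 ε ≤ 1/8 := min_le_left _ _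

lemma Del0_sq {ε : ℝ} (hε₁ : 1 / (4 * Real.pi) < ε) (hε₂ : ε < 3 / (4 * Real.pi)) :
    (Del0 ε) ^ 2 ≤ (1 - 2 * |1 - 2 * Real.pi * ε|) / 200 := by
  have hb := b_lt_half hε₁ hε₂
  have h0 : 0 ≤ (1 - 2 * |1 - 2 * Real.pi * ε|) / 200 := by linarith
  have h1 : Del0 ε ≤ Real.sqrt ((1 - 2 * |1 - 2 * Real.pi * ε|) / 200) := min_le_right _ _
  have h2 : 0 ≤ Del0 ε := (Del0_pos hε₁ hε₂).le
  calc (Del0 ε)^2 ≤ (Real.sqrt ((1 - 2 * |1 - 2 * Real.pi * ε|) / 200))^2 :=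
        pow_le_pow_left₀ h2 h1 2
    _ = (1 - 2 * |1 - 2 * Real.pi * ε|) / 200 := Real.sq_sqrt h0

set_option maxHeartbeats 1000000 in
lemma contract {ε : ℝ} (hε₁ : 1 / (4 * Real.pi) < ε) (hε₂ : ε < 3 / (4 * Real.pi))
    {Δ c y : ℝ} (hΔ0 : 0 ≤ Δ) (hΔ : Δ ≤ Del0 ε)
    (hc1 : Real.cos (2 * Real.pi * Δ) ≤ c) (hc2 : c ≤ 1) (hy : |y| ≤ Δ) :
    |2 * (y - ε * Real.sin (2 * Real.pi * y) * c)| ≤ lamC ε * |y| := by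
  have hπ := Real.pi_pos
  have hπ3 : Real.pi < 3.15 := by
    have := Real.pi_lt_d2; norm_num at this ⊢; linarith
  have hπg : 3 < Real.pi := Real.pi_gt_three
  have hπsq : Real.pi^2 < 10 := by nlinarith
  obtain ⟨ha1, ha2⟩ := a_bounds hε₁ hε₂
  have hb := b_lt_half hε₁ hε₂
  have hε0 : 0 < ε := lt_trans (by positivity) hε₁
  have hΔ8 : Δ ≤ 1/8 := le_trans hΔ (Del0_le ε)
  have hΔsq : Δ^2 ≤ (1 - 2 * |1 - 2 * Real.pi * ε|) / 200 :=
    le_trans (pow_le_pow_left₀ hΔ0 hΔ 2) (Del0_sq hε₁ hε₂)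
  set b := |1 - 2 * Real.pi * ε| with hbdef
  have hb0 : 0 ≤ b := abs_nonneg _
  have hΔsq8 : Δ^2 ≤ 1/64 := by nlinarith
  have hcos : 1 - (2 * Real.pi * Δ)^2 / 2 ≤ Real.cos (2 * Real.pi * Δ) :=
    Real.one_sub_sq_div_two_le_cos
  have hring : (2 * Real.pi * Δ)^2 / 2 = 2 * Real.pi^2 * Δ^2 := by ring
  have hc0 : 1 - 2 * Real.pi^2 * Δ^2 ≤ c := by rw [hring] at hcos; linarith
  have hppd : 2 * Real.pi^2 * Δ^2 ≤ 20 * (1/64) := by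
    nlinarith [sq_nonneg Real.pi, sq_nonneg Δ]
  have hcpos : 0 < c := by linarith
  have habsy : 0 ≤ |y| := abs_nonneg y
  have hysq : |y|^2 ≤ Δ^2 := pow_le_pow_left₀ habsy hy 2
  have hyabs8 : |y| ≤ 1/8 := le_trans hy hΔ8
  have ht1 : |2 * Real.pi * y| ≤ 1 := by
    rw [abs_mul, abs_of_nonneg (by positivity : (0:ℝ) ≤ 2 * Real.pi)]
    have := mul_le_mul_of_nonneg_left hyabs8 (le_of_lt hπ)
    nlinarith
  have hsin := abs_self_sub_sin ht1
  rw [abs_mul, abs_of_nonneg (by positivity : (0:ℝ) ≤ 2 * Real.pi)] at hsin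
  have hεq : ε < 1/4 := by
    have h34 : 3/(4*Real.pi) < 1/4 := by
      rw [div_lt_div_iff₀ (by positivity) (by norm_num)]
      linarith
    linarith
  -- term 1
  have h1c : 1 - c ≤ 2 * Real.pi^2 * Δ^2 := by linarith
  have h1cn : (0:ℝ) ≤ 1 - c := by linarith
  have hstep : |1 - 2 * Real.pi * ε * c| ≤ b + 30 * Δ^2 := by
    have hdec : (1 - 2 * Real.pi * ε * c)
        = (1 - 2 * Real.pi * ε) + 2 * Real.pi * ε * (1 - c) := by ring
    have habs : |1 - 2 * Real.pi * ε * c| ≤ b + 2 * Real.pi * ε * (1 - c) := by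
      rw [hdec]
      refine le_trans (abs_add_le _ _) ?_
      rw [abs_of_nonneg (mul_nonneg (by positivity) h1cn)]
    have h2 : 2 * Real.pi * ε * (1 - c) ≤ (3/2) * (2 * Real.pi^2 * Δ^2) :=
      mul_le_mul ha2.le h1c h1cn (by norm_num)
    have h3 : (3/2) * (2 * Real.pi^2 * Δ^2) ≤ 30 * Δ^2 := by
      have := mul_le_mul_of_nonneg_right hπsq.le (sq_nonneg Δ)
      linarith
    linarith
  have hterm1 : |2 * (1 - 2 * Real.pi * ε * c) * y| ≤ 2 * (b + 30 * Δ^2) * |y| := by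
    rw [abs_mul, abs_mul, abs_two]
    have := mul_le_mul_of_nonneg_right hstep habsy
    linarith
  -- term 2
  have hεc : 2 * ε * c ≤ 1/2 := by
    have := mul_le_mul_of_nonneg_left hc2 (by positivity : (0:ℝ) ≤ 2 * ε)
    linarith
  have hπ3c : Real.pi^3 < 32 := by
    have h1 : Real.pi^3 = Real.pi^2 * Real.pi := by ring
    nlinarith
  have hterm2 : |2 * ε * c * ((2 * Real.pi * y) - Real.sin (2 * Real.pi * y))|
      ≤ 32 * Δ^2 * |y| := by
    rw [abs_mul, abs_of_nonneg (by positivity : (0:ℝ) ≤ 2 * ε * c)]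
    have hprod : 2 * ε * c * |2 * Real.pi * y - Real.sin (2 * Real.pi * y)|
        ≤ (1/2) * ((2 * Real.pi * |y|)^3 / 4) :=
      mul_le_mul hεc hsin (abs_nonneg _) (by norm_num)
    refine le_trans hprod ?_
    have hy3 : |y|^3 ≤ Δ^2 * |y| := by
      calc |y|^3 = |y|^2 * |y| := by ring
        _ ≤ Δ^2 * |y| := mul_le_mul_of_nonneg_right hysq habsy
    calc (1/2) * ((2 * Real.pi * |y|)^3 / 4) = Real.pi^3 * |y|^3 := by ring
      _ ≤ 32 * |y|^3 := mul_le_mul_of_nonneg_right hπ3c.le (pow_nonneg habsy 3)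
      _ ≤ 32 * (Δ^2 * |y|) := by linarith
      _ = 32 * Δ^2 * |y| := by ring
  -- combine
  have hid : 2 * (y - ε * Real.sin (2 * Real.pi * y) * c)
      = 2 * (1 - 2 * Real.pi * ε * c) * y
        + 2 * ε * c * ((2 * Real.pi * y) - Real.sin (2 * Real.pi * y)) := by ring
  rw [hid]
  refine le_trans (abs_add_le _ _) ?_
  refine le_trans (add_le_add hterm1 hterm2) ?_
  have hfin : 2 * (b + 30 * Δ^2) + 32 * Δ^2 ≤ lamC ε := by
    rw [lamC, ← hbdef]
    linarith [sq_nonneg Δ]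
  calc 2 * (b + 30 * Δ^2) * |y| + 32 * Δ^2 * |y|
      = (2 * (b + 30 * Δ^2) + 32 * Δ^2) * |y| := by ring
    _ ≤ lamC ε * |y| := mul_le_mul_of_nonneg_right hfin habsy

def SIcc (r : ℝ) : Set UnitAddCircle := (fun x : ℝ => (x : UnitAddCircle)) '' Set.Icc (-r) r

lemma isClosed_SIcc (r : ℝ) : IsClosed (SIcc r) :=
  (isCompact_Icc.image (AddCircle.continuous_mk' 1)).isClosed

lemma integrable_of_continuous {ψ : UnitAddCircle → ℝ} (hψ : Continuous ψ)
    (μ : Measure UnitAddCircle) [IsFiniteMeasure μ] : Integrable ψ μ := by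
  obtain ⟨x, hx⟩ := hψ.norm.exists_forall_ge
    (by rw [Filter.cocompact_eq_bot]; exact Filter.tendsto_bot)
  refine ⟨hψ.aestronglyMeasurable, ?_⟩
  exact MeasureTheory.HasFiniteIntegral.of_bounded
    (C := ‖ψ x‖) (Filter.Eventually.of_forall fun z => hx z)

lemma cosObs_le_one (z : UnitAddCircle) : cosObs z ≤ 1 := by
  induction z using QuotientAddGroup.induction_on with
  | H y => rw [cosObs_coe]; exact Real.cos_le_one _

lemma cosObs_ge {Δ : ℝ} (hΔ0 : 0 ≤ Δ) (hΔ8 : Δ ≤ 1/8) {z : UnitAddCircle}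
    (hz : z ∈ SIcc Δ) : Real.cos (2 * Real.pi * Δ) ≤ cosObs z := by
  obtain ⟨y, hy, rfl⟩ := hz
  rw [cosObs_coe]
  have hπ := Real.pi_pos
  have hyabs : |y| ≤ Δ := abs_le.mpr ⟨hy.1, hy.2⟩
  have h1 : Real.cos (2 * Real.pi * y) = Real.cos (2 * Real.pi * |y|) := by
    rw [← Real.cos_abs (2 * Real.pi * y), abs_mul,
      abs_of_nonneg (by positivity : (0:ℝ) ≤ 2 * Real.pi)]
  rw [h1]
  apply Real.cos_le_cos_of_nonneg_of_le_pi (by positivity)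
  · nlinarith
  · nlinarith [abs_nonneg y]

lemma intBound {Δ : ℝ} (hΔ0 : 0 ≤ Δ) (hΔ8 : Δ ≤ 1/8) (μ : Measure UnitAddCircle)
    [IsProbabilityMeasure μ] (hsupp : μ (SIcc Δ)ᶜ = 0) :
    Real.cos (2 * Real.pi * Δ) ≤ (∫ z, cosObs z ∂μ) ∧ (∫ z, cosObs z ∂μ) ≤ 1 := by
  have hint : Integrable cosObs μ := integrable_of_continuous continuous_cosObs μ
  constructor
  · have hae : ∀ᵐ z ∂μ, Real.cos (2 * Real.pi * Δ) ≤ cosObs z := by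
      refine MeasureTheory.ae_iff.mpr (measure_mono_null ?_ hsupp)
      intro z hz
      simp only [Set.mem_setOf_eq, not_le] at hz
      intro hmem
      exact absurd (cosObs_ge hΔ0 hΔ8 hmem) (not_le.mpr hz)
    calc Real.cos (2 * Real.pi * Δ)
        = ∫ _z, Real.cos (2 * Real.pi * Δ) ∂μ := by simp
      _ ≤ ∫ z, cosObs z ∂μ := integral_mono_ae (integrable_const _) hint hae
  · calc (∫ z, cosObs z ∂μ) ≤ ∫ _z, (1:ℝ) ∂μ :=
        integral_mono hint (integrable_const _) cosObs_le_one
      _ = 1 := by simp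

lemma Tsc_step {ε : ℝ} (hε₁ : 1 / (4 * Real.pi) < ε) (hε₂ : ε < 3 / (4 * Real.pi))
    {Δ : ℝ} (hΔ0 : 0 ≤ Δ) (hΔ : Δ ≤ Del0 ε) (μ : Measure UnitAddCircle)
    (hμ : IsProbabilityMeasure μ) (hsupp : μ (SIcc Δ)ᶜ = 0) :
    IsProbabilityMeasure (Tsc ε μ) ∧ Tsc ε μ (SIcc (lamC ε * Δ))ᶜ = 0 := by
  have hmeas : Measurable (fMu ε μ) := (continuous_fMu ε μ).measurable
  have hΔ8 : Δ ≤ 1/8 := le_trans hΔ (Del0_le ε)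
  obtain ⟨hc1, hc2⟩ := intBound hΔ0 hΔ8 μ hsupp
  refine ⟨Measure.isProbabilityMeasure_map hmeas.aemeasurable, ?_⟩
  rw [Tsc, Measure.map_apply hmeas (isClosed_SIcc _).measurableSet.compl]
  refine measure_mono_null ?_ hsupp
  intro z hz
  simp only [Set.mem_preimage, Set.mem_compl_iff] at hz ⊢
  intro hmem
  apply hz
  obtain ⟨y, hy, rfl⟩ := hmem
  rw [fMu_coe]
  have hyabs : |y| ≤ Δ := abs_le.mpr ⟨hy.1, hy.2⟩
  have hcontr := contract hε₁ hε₂ hΔ0 hΔ hc1 hc2 hyabs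
  have hbound : |2 * (y - ε * Real.sin (2 * Real.pi * y) * ∫ z, cosObs z ∂μ)|
      ≤ lamC ε * Δ := le_trans hcontr
      (mul_le_mul_of_nonneg_left hyabs (lamC_nonneg ε))
  exact ⟨_, abs_le.mp hbound |>.1.trans_eq' rfl |> fun h => ⟨h, (abs_le.mp hbound).2⟩, rfl⟩

lemma Tsc_iter {ε : ℝ} (hε₁ : 1 / (4 * Real.pi) < ε) (hε₂ : ε < 3 / (4 * Real.pi))
    (μ : Measure UnitAddCircle) (hμ : IsProbabilityMeasure μ)
    (hsupp : μ (SIcc (Del0 ε))ᶜ = 0) (n : ℕ) :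
    IsProbabilityMeasure ((fun ν => Tsc ε ν)^[n] μ) ∧
      ((fun ν => Tsc ε ν)^[n] μ) (SIcc ((lamC ε)^n * Del0 ε))ᶜ = 0 := by
  induction n with
  | zero => simpa using ⟨hμ, hsupp⟩
  | succ n ih =>
    obtain ⟨ih1, ih2⟩ := ih
    have hΔ0 : 0 ≤ (lamC ε)^n * Del0 ε :=
      mul_nonneg (pow_nonneg (lamC_nonneg ε) n) (Del0_pos hε₁ hε₂).le
    have hΔ : (lamC ε)^n * Del0 ε ≤ Del0 ε := by
      have h1 : (lamC ε)^n ≤ 1 := pow_le_one₀ (lamC_nonneg ε) (lamC_lt_one hε₁ hε₂).le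
      nlinarith [(Del0_pos hε₁ hε₂).le]
    have hstep := Tsc_step hε₁ hε₂ hΔ0 hΔ _ ih1 ih2
    rw [Function.iterate_succ_apply']
    refine ⟨hstep.1, ?_⟩
    have heq : lamC ε * ((lamC ε)^n * Del0 ε) = (lamC ε)^(n+1) * Del0 ε := by ring
    rw [← heq]
    exact hstep.2

lemma dist_SIcc {r : ℝ} (hr : r ≤ 1/8) {z : UnitAddCircle} (hz : z ∈ SIcc r) :
    dist z 0 ≤ r := by
  obtain ⟨y, hy, rfl⟩ := hz
  have hys : |y| ≤ r := abs_le.mpr ⟨hy.1, hy.2⟩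
  have hy8 : |y| ≤ 1/8 := le_trans hys hr
  rw [dist_zero_right, UnitAddCircle.norm_eq]
  have hround : round y = 0 := by
    rw [round_eq, Int.floor_eq_zero_iff]
    have h := abs_le.mp hy8
    constructor
    · linarith [h.1]
    · linarith [h.2]
  rw [hround]
  simpa using hys

/-- For `ε ∈ (1/(4π), 3/(4π))`, the synchronized state `δ₀` is stable: there is `Δ₀ > 0` such
that for every probability measure `μ` supported in the projection of `[−Δ₀, Δ₀]`, the iterates
`T_ε^n μ` converge weakly to `δ₀`. -/
theorem stmt16 (ε : ℝ) (hε₁ : 1 / (4 * Real.pi) < ε) (hε₂ : ε < 3 / (4 * Real.pi)) :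
    ∃ Δ₀ > (0:ℝ),
      ∀ μ : Measure UnitAddCircle, IsProbabilityMeasure μ →
        μ (((fun x : ℝ => (x : UnitAddCircle)) '' Set.Icc (-Δ₀) Δ₀)ᶜ) = 0 →
        ∀ ψ : UnitAddCircle → ℝ, Continuous ψ →
          Filter.Tendsto (fun n : ℕ => ∫ x, ψ x ∂((fun ν => Tsc ε ν)^[n] μ))
            Filter.atTop (nhds (ψ 0)) := by
  refine ⟨Del0 ε, Del0_pos hε₁ hε₂, ?_⟩
  intro μ hμ hsupp ψ hψ
  have hiter := Tsc_iter hε₁ hε₂ μ hμ hsupp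
  rw [Metric.tendsto_atTop]
  intro e he
  obtain ⟨δ, hδpos, hδ⟩ := Metric.continuous_iff.mp hψ 0 (e/2) (half_pos he)
  have hlim : Filter.Tendsto (fun n => (lamC ε)^n * Del0 ε) Filter.atTop (nhds 0) := by
    simpa using (tendsto_pow_atTop_nhds_zero_of_lt_one (lamC_nonneg ε)
      (lamC_lt_one hε₁ hε₂)).mul_const (Del0 ε)
  obtain ⟨N, hN⟩ := (Metric.tendsto_atTop.mp hlim) δ hδpos
  refine ⟨N, fun n hn => ?_⟩
  have hrn0 : 0 ≤ (lamC ε)^n * Del0 ε :=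
    mul_nonneg (pow_nonneg (lamC_nonneg ε) n) (Del0_pos hε₁ hε₂).le
  have hrn8 : (lamC ε)^n * Del0 ε ≤ 1/8 := by
    have h1 : (lamC ε)^n ≤ 1 := pow_le_one₀ (lamC_nonneg ε) (lamC_lt_one hε₁ hε₂).le
    nlinarith [(Del0_pos hε₁ hε₂).le, Del0_le ε]
  have hrnδ : (lamC ε)^n * Del0 ε < δ := by
    have := hN n hn
    rw [Real.dist_eq] at this
    calc (lamC ε)^n * Del0 ε ≤ |(lamC ε)^n * Del0 ε - 0| := by
          rw [sub_zero]; exact le_abs_self _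
      _ < δ := this
  haveI := (hiter n).1
  have hsupn := (hiter n).2
  set μn := (fun ν => Tsc ε ν)^[n] μ with hμn
  have hint : Integrable ψ μn := integrable_of_continuous hψ μn
  have hkey : (∫ x, ψ x ∂μn) - ψ 0 = ∫ x, (ψ x - ψ 0) ∂μn := by
    rw [integral_sub hint (integrable_const _), integral_const]
    simp
  have hae : ∀ᵐ z ∂μn, ‖ψ z - ψ 0‖ ≤ e/2 := by
    have hmem : ∀ᵐ z ∂μn, z ∈ SIcc ((lamC ε)^n * Del0 ε) := by
      rw [MeasureTheory.ae_iff]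
      exact measure_mono_null (fun z hz => hz) hsupn
    filter_upwards [hmem] with z hz
    have hd : dist z 0 < δ := lt_of_le_of_lt (dist_SIcc hrn8 hz) hrnδ
    have := hδ z hd
    rw [Real.dist_eq] at this
    exact le_of_lt this
  have hnorm := MeasureTheory.norm_integral_le_of_norm_le_const hae
  rw [Real.dist_eq, hkey]
  have hμuniv : (μn Set.univ).toReal = 1 := by simp
  calc |∫ x, (ψ x - ψ 0) ∂μn| ≤ e/2 * (μn Set.univ).toReal := hnorm
    _ = e/2 := by rw [hμuniv, mul_one]
    _ < e := half_lt_self he
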